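/- arXiv:2201.02013 — 2 statements merged into one kernel-verified Lean document; each statement's English description precedes it below -/
import Mathlib

section
/- Let n ≥ 2 and let x, x' ∈ {0,1}^n satisfy wt(x) ≡ wt(x') (mod 4). Suppose d_1, e_1, d_2, e_2 ∈ {1,…,n} with d_1 ≠ e_1, d_2 ≠ e_2, e_1 < d_1 ≤ d_2, e_2 < d_1, e_1 ≠ e_2, and E(x, d_1, e_1) = E(x', d_2, e_2). Let λ_2 = max{e_1, e_2} and let u_i = Σ_{ℓ=i}^n x_ℓ − Σ_{ℓ=i}^n x'_ℓ. Then: either u_i ≥ 0 for all i ∈ [1, λ_2] or u_i ≤ 0 for all i ∈ [1, λ_2]; either u_i ≥ 0 for all i ∈ [λ_2+1, n] or u_i ≤ 0 for all i ∈ [λ_2+1, n]; and |u_i| ≤ 1 for all i ∈ {1,…,n}. -/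
/-- The bit of `x` at 1-based position `p` (junk value `0` out of range). -/
def getBit {n : ℕ} (x : Fin n → Fin 2) (p : ℕ) : Fin 2 :=
  if h : p - 1 < n then x ⟨p - 1, h⟩ else 0

/-- Hamming weight of a binary sequence. -/
def wt {n : ℕ} (x : Fin n → Fin 2) : ℕ := ∑ i, (x i : ℕ)

/-- The `j`-th order VT syndrome `f_j(x) = Σ_{i=1}^n (Σ_{ℓ=1}^i ℓ^{j-1}) x_i`. -/
def vtSyn {n : ℕ} (j : ℕ) (x : Fin n → Fin 2) : ℕ :=
  ∑ i : Fin n, (∑ l ∈ Finset.Icc 1 ((i : ℕ) + 1), l ^ (j - 1)) * (x i : ℕ)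

/-- Substitute the symbol at 1-based position `e` of `x` with its complement. -/
def substAt {n : ℕ} (x : Fin n → Fin 2) (e : ℕ) : Fin n → Fin 2 :=
  fun i => if (i : ℕ) + 1 = e then 1 - x i else x i

/-- Delete the symbol at 1-based position `d` of `x`. -/
def delAt {n : ℕ} (x : Fin n → Fin 2) (d : ℕ) : Fin (n - 1) → Fin 2 :=
  fun i => if (i : ℕ) + 1 < d then getBit x ((i : ℕ) + 1) else getBit x ((i : ℕ) + 2)

/-- `E(x,d,e)`: delete the symbol at position `d` and substitute the symbol at
position `e` of `x` (positions are 1-based, taken in the original `x`). -/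
def delSub {n : ℕ} (x : Fin n → Fin 2) (d e : ℕ) : Fin (n - 1) → Fin 2 :=
  delAt (substAt x e) d

/-- The single-deletion single-substitution error ball `B_{1,1}(x)`. -/
def ball {n : ℕ} (x : Fin n → Fin 2) : Set (Fin (n - 1) → Fin 2) :=
  {y | (∃ d ∈ Finset.Icc 1 n, y = delAt x d) ∨
       ∃ d ∈ Finset.Icc 1 n, ∃ e ∈ Finset.Icc 1 n, d ≠ e ∧ y = delSub x d e}

/-- The code `C_n(c0,c1,c2)`. -/
def codeC (n : ℕ) (c0 c1 c2 : ℕ) : Finset (Fin n → Fin 2) :=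
  Finset.univ.filter fun x =>
    x ≠ (fun _ => 0) ∧ x ≠ (fun _ => 1) ∧
    wt x % 4 = c0 ∧ vtSyn 1 x % (2 * n) = c1 ∧ vtSyn 2 x % (2 * n ^ 2) = c2

/-- `u_i = Σ_{ℓ=i}^n x_ℓ − Σ_{ℓ=i}^n x'_ℓ` (1-based positions, value in `ℤ`). -/
def uSeq {n : ℕ} (x x' : Fin n → Fin 2) (i : ℕ) : ℤ :=
  (∑ l ∈ Finset.Icc i n, ((getBit x l : ℕ) : ℤ)) -
    ∑ l ∈ Finset.Icc i n, ((getBit x' l : ℕ) : ℤ)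

lemma getBit_le' {n : ℕ} (x : Fin n → Fin 2) (p : ℕ) : ((getBit x p : ℕ) : ℤ) ≤ 1 := by
  unfold getBit
  split
  · exact_mod_cast Fin.is_le _
  · norm_num

lemma getBit_nonneg' {n : ℕ} (x : Fin n → Fin 2) (p : ℕ) : 0 ≤ ((getBit x p : ℕ) : ℤ) :=
  Int.natCast_nonneg _

lemma fin2_one_sub' (a : Fin 2) : (((1 - a : Fin 2) : ℕ) : ℤ) = 1 - ((a : ℕ) : ℤ) := by
  revert a; decide

lemma uSeq_rec' {n : ℕ} (x x' : Fin n → Fin 2) (i : ℕ) (h1 : 1 ≤ i) (h2 : i ≤ n) :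
    uSeq x x' i = (((getBit x i : ℕ) : ℤ) - ((getBit x' i : ℕ) : ℤ)) + uSeq x x' (i+1) := by
  unfold uSeq
  rw [show Finset.Icc i n = insert i (Finset.Icc (i+1) n) by ext a; simp; omega,
    Finset.sum_insert (by simp), Finset.sum_insert (by simp)]
  ring

lemma uSeq_top' {n : ℕ} (x x' : Fin n → Fin 2) (i : ℕ) (h : n < i) : uSeq x x' i = 0 := by
  unfold uSeq
  rw [Finset.Icc_eq_empty (by omega)]
  simp

lemma getBit_substAt' {n : ℕ} (x : Fin n → Fin 2) (e p : ℕ) (h1 : 1 ≤ p) (h2 : p ≤ n) :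
    getBit (substAt x e) p = if p = e then 1 - getBit x p else getBit x p := by
  have hpn : p - 1 < n := by omega
  unfold getBit substAt
  simp only [dif_pos hpn, show p - 1 + 1 = p from by omega]

lemma delSub_apply' {n : ℕ} (x : Fin n → Fin 2) (d e p : ℕ) (h1 : 1 ≤ p)
    (hp : p - 1 < n - 1) :
    delSub x d e ⟨p - 1, hp⟩ =
      if p < d then getBit (substAt x e) p else getBit (substAt x e) (p+1) := by
  unfold delSub delAt
  simp only [show p - 1 + 1 = p from by omega, show p - 1 + 2 = p + 1 from by omega]

lemma downInd' (P : ℕ → Prop) (a b : ℕ) (hbase : P (b+1))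
    (hstep : ∀ i, a ≤ i → i ≤ b → P (i+1) → P i) :
    ∀ i, a ≤ i → i ≤ b + 1 → P i := by
  have H : ∀ k i, a ≤ i → i ≤ b + 1 → b + 1 - i ≤ k → P i := by
    intro k
    induction k with
    | zero =>
      intro i ha hb hk
      have : i = b + 1 := by omega
      subst this; exact hbase
    | succ k ih =>
      intro i ha hb hk
      rcases eq_or_lt_of_le hb with h | h
      · subst h; exact hbase
      · exact hstep i ha (by omega) (ih (i+1) (by omega) (by omega) (by omega))
  exact fun i ha hb => H (b + 1 - i) i ha hb le_rfl

lemma sum_getBit' {n : ℕ} (x : Fin n → Fin 2) :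
    ∑ l ∈ Finset.Icc 1 n, ((getBit x l : ℕ) : ℤ) = (wt x : ℤ) := by
  have hx : ∀ i : Fin n, ((x i : ℕ) : ℤ) = ((getBit x ((i : ℕ) + 1) : ℕ) : ℤ) := by
    intro i
    unfold getBit
    rw [dif_pos (by simp)]
    simp
  have hwt : (wt x : ℤ) = ∑ i : Fin n, ((getBit x ((i : ℕ) + 1) : ℕ) : ℤ) := by
    unfold wt
    push_cast
    exact Finset.sum_congr rfl fun i _ => hx i
  rw [hwt, Fin.sum_univ_eq_sum_range (fun j => ((getBit x (j + 1) : ℕ) : ℤ)) n]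
  rw [show Finset.Icc 1 n = (Finset.range n).image (· + 1) by
    ext a
    simp only [Finset.mem_Icc, Finset.mem_image, Finset.mem_range]
    constructor
    · rintro ⟨p1, p2⟩; exact ⟨a - 1, by omega, by omega⟩
    · rintro ⟨b, hb, rfl⟩; omega]
  rw [Finset.sum_image (by intros a _ b _ h; beta_reduce at h; omega)]

/-- Claim 1, Case (i): with `λ₂ = max{e1,e2}`, the sequence `u`
is sign-constant on `[1,λ₂]` and on `[λ₂+1,n]`, and `|u_i| ≤ 1` everywhere. -/
theorem stmt15 (n : ℕ) (hn : 2 ≤ n) (x x' : Fin n → Fin 2)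
    (hwt : wt x ≡ wt x' [MOD 4])
    (d1 e1 d2 e2 : ℕ)
    (hd1 : d1 ∈ Finset.Icc 1 n) (he1 : e1 ∈ Finset.Icc 1 n)
    (hd2 : d2 ∈ Finset.Icc 1 n) (he2 : e2 ∈ Finset.Icc 1 n)
    (h1 : d1 ≠ e1) (h2 : d2 ≠ e2)
    (hcase : e1 < d1 ∧ d1 ≤ d2 ∧ e2 < d1 ∧ e1 ≠ e2)
    (hE : delSub x d1 e1 = delSub x' d2 e2) :
    ((∀ i ∈ Finset.Icc 1 (max e1 e2), 0 ≤ uSeq x x' i) ∨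
      (∀ i ∈ Finset.Icc 1 (max e1 e2), uSeq x x' i ≤ 0)) ∧
    ((∀ i ∈ Finset.Icc (max e1 e2 + 1) n, 0 ≤ uSeq x x' i) ∨
      (∀ i ∈ Finset.Icc (max e1 e2 + 1) n, uSeq x x' i ≤ 0)) ∧
    (∀ i ∈ Finset.Icc 1 n, |uSeq x x' i| ≤ 1) := by
  obtain ⟨hc1, hc2, hc3, hc4⟩ := hcase
  simp only [Finset.mem_Icc] at hd1 he1 hd2 he2
  obtain ⟨hd1l, hd1r⟩ := hd1
  obtain ⟨he1l, he1r⟩ := he1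
  obtain ⟨hd2l, hd2r⟩ := hd2
  obtain ⟨he2l, he2r⟩ := he2
  have hkey : ∀ p, 1 ≤ p → p ≤ n - 1 →
      (if p < d1 then getBit (substAt x e1) p else getBit (substAt x e1) (p+1)) =
      (if p < d2 then getBit (substAt x' e2) p else getBit (substAt x' e2) (p+1)) := by
    intro p hp1 hp2
    have hp : p - 1 < n - 1 := by omega
    have h := congrFun hE ⟨p - 1, hp⟩
    rwa [delSub_apply' x d1 e1 p hp1 hp, delSub_apply' x' d2 e2 p hp1 hp] at h
  have hlow : ∀ p, 1 ≤ p → p < d1 → p ≠ e1 → p ≠ e2 →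
      ((getBit x p : ℕ) : ℤ) = ((getBit x' p : ℕ) : ℤ) := by
    intro p hp1 hp2 hp3 hp4
    have hk := hkey p hp1 (by omega)
    rw [if_pos hp2, if_pos (by omega), getBit_substAt' x e1 p hp1 (by omega), if_neg hp3,
      getBit_substAt' x' e2 p hp1 (by omega), if_neg hp4] at hk
    exact congrArg (fun a : Fin 2 => ((a : ℕ) : ℤ)) hk
  have hflip1 : ((getBit x' e1 : ℕ) : ℤ) = 1 - ((getBit x e1 : ℕ) : ℤ) := by
    have hk := hkey e1 he1l (by omega)
    rw [if_pos hc1, if_pos (by omega), getBit_substAt' x e1 e1 he1l (by omega), if_pos rfl,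
      getBit_substAt' x' e2 e1 he1l (by omega), if_neg hc4] at hk
    rw [← hk]
    exact fin2_one_sub' _
  have hflip2 : ((getBit x e2 : ℕ) : ℤ) = 1 - ((getBit x' e2 : ℕ) : ℤ) := by
    have hk := hkey e2 he2l (by omega)
    rw [if_pos hc3, if_pos (by omega), getBit_substAt' x e1 e2 he2l (by omega),
      if_neg (Ne.symm hc4), getBit_substAt' x' e2 e2 he2l (by omega), if_pos rfl] at hk
    rw [hk]
    exact fin2_one_sub' _
  have hmid : ∀ p, d1 ≤ p → p < d2 →
      ((getBit x (p+1) : ℕ) : ℤ) = ((getBit x' p : ℕ) : ℤ) := by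
    intro p hp1 hp2
    have hp0 : 1 ≤ p := by omega
    have hk := hkey p hp0 (by omega)
    rw [if_neg (by omega), if_pos hp2, getBit_substAt' x e1 (p+1) (by omega) (by omega),
      if_neg (by omega), getBit_substAt' x' e2 p hp0 (by omega), if_neg (by omega)] at hk
    exact congrArg (fun a : Fin 2 => ((a : ℕ) : ℤ)) hk
  have hhigh : ∀ p, d2 ≤ p → p ≤ n - 1 →
      ((getBit x (p+1) : ℕ) : ℤ) = ((getBit x' (p+1) : ℕ) : ℤ) := by
    intro p hp1 hp2
    have hp0 : 1 ≤ p := by omega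
    have hk := hkey p hp0 hp2
    rw [if_neg (by omega), if_neg (by omega), getBit_substAt' x e1 (p+1) (by omega) (by omega),
      if_neg (by omega), getBit_substAt' x' e2 (p+1) (by omega) (by omega),
      if_neg (by omega)] at hk
    exact congrArg (fun a : Fin 2 => ((a : ℕ) : ℤ)) hk
  -- Zone 1: i > d2
  have L1 : ∀ i, d2 < i → uSeq x x' i = 0 := by
    have H := downInd' (fun i => uSeq x x' i = 0) (d2+1) n (uSeq_top' x x' (n+1) (by omega))
      (fun i ha hb ih => by
        beta_reduce
        beta_reduce at ih
        rw [uSeq_rec' x x' i (by omega) hb, ih]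
        have h := hhigh (i-1) (by omega) (by omega)
        rw [show i - 1 + 1 = i from by omega] at h
        rw [h]; ring)
    intro i hi
    rcases le_or_gt i (n+1) with h | h
    · exact H i (by omega) h
    · exact uSeq_top' x x' i (by omega)
  -- Zone 2: d1 < i ≤ d2 + 1
  have L2 : ∀ i, d1 < i → i ≤ d2 + 1 →
      uSeq x x' i = ((getBit x' (i-1) : ℕ) : ℤ) - ((getBit x' d2 : ℕ) : ℤ) := by
    have H := downInd'
      (fun i => uSeq x x' i = ((getBit x' (i-1) : ℕ) : ℤ) - ((getBit x' d2 : ℕ) : ℤ))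
      (d1+1) d2
      (by beta_reduce; rw [L1 (d2+1) (by omega), show d2 + 1 - 1 = d2 from by omega]; ring)
      (fun i ha hb ih => by
        beta_reduce
        beta_reduce at ih
        rw [uSeq_rec' x x' i (by omega) (by omega), ih]
        simp only [Nat.add_sub_cancel]
        have h := hmid (i-1) (by omega) (by omega)
        rw [show i - 1 + 1 = i from by omega] at h
        rw [h]; ring)
    intro i hi1 hi2
    exact H i (by omega) hi2
  -- Zone 3: max e1 e2 < i ≤ d1
  have hbase3 : uSeq x x' d1 = ((getBit x d1 : ℕ) : ℤ) - ((getBit x' d2 : ℕ) : ℤ) := by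
    rw [uSeq_rec' x x' d1 (by omega) hd1r, L2 (d1+1) (by omega) (by omega)]
    simp only [Nat.add_sub_cancel]
    ring
  have L3 : ∀ i, max e1 e2 < i → i ≤ d1 →
      uSeq x x' i = ((getBit x d1 : ℕ) : ℤ) - ((getBit x' d2 : ℕ) : ℤ) := by
    have H := downInd'
      (fun i => uSeq x x' i = ((getBit x d1 : ℕ) : ℤ) - ((getBit x' d2 : ℕ) : ℤ))
      (max e1 e2 + 1) (d1 - 1)
      (by beta_reduce; rw [show d1 - 1 + 1 = d1 from by omega]; exact hbase3)
      (fun i ha hb ih => by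
        beta_reduce
        beta_reduce at ih
        rw [uSeq_rec' x x' i (by omega) (by omega), ih,
          hlow i (by omega) (by omega) (by omega) (by omega)]
        ring)
    intro i hi1 hi2
    exact H i (by omega) (by omega)
  -- Zone 4: min e1 e2 < i ≤ max e1 e2
  have hbase4 : uSeq x x' (max e1 e2) =
      (((getBit x d1 : ℕ) : ℤ) - ((getBit x' d2 : ℕ) : ℤ)) +
      (((getBit x (max e1 e2) : ℕ) : ℤ) - ((getBit x' (max e1 e2) : ℕ) : ℤ)) := by
    rw [uSeq_rec' x x' (max e1 e2) (by omega) (by omega), L3 (max e1 e2 + 1) (by omega) (by omega)]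
    ring
  have L4 : ∀ i, min e1 e2 < i → i ≤ max e1 e2 →
      uSeq x x' i =
        (((getBit x d1 : ℕ) : ℤ) - ((getBit x' d2 : ℕ) : ℤ)) +
        (((getBit x (max e1 e2) : ℕ) : ℤ) - ((getBit x' (max e1 e2) : ℕ) : ℤ)) := by
    have H := downInd'
      (fun i => uSeq x x' i =
        (((getBit x d1 : ℕ) : ℤ) - ((getBit x' d2 : ℕ) : ℤ)) +
        (((getBit x (max e1 e2) : ℕ) : ℤ) - ((getBit x' (max e1 e2) : ℕ) : ℤ)))
      (min e1 e2 + 1) (max e1 e2 - 1)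
      (by beta_reduce; rw [show max e1 e2 - 1 + 1 = max e1 e2 from by omega]; exact hbase4)
      (fun i ha hb ih => by
        beta_reduce
        beta_reduce at ih
        rw [uSeq_rec' x x' i (by omega) (by omega), ih,
          hlow i (by omega) (by omega) (by omega) (by omega)]
        ring)
    intro i hi1 hi2
    exact H i (by omega) (by omega)
  -- Zone 5: 1 ≤ i ≤ min e1 e2
  have hbase5 : uSeq x x' (min e1 e2) =
      (((getBit x d1 : ℕ) : ℤ) - ((getBit x' d2 : ℕ) : ℤ)) +
      (((getBit x (max e1 e2) : ℕ) : ℤ) - ((getBit x' (max e1 e2) : ℕ) : ℤ)) +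
      (((getBit x (min e1 e2) : ℕ) : ℤ) - ((getBit x' (min e1 e2) : ℕ) : ℤ)) := by
    rw [uSeq_rec' x x' (min e1 e2) (by omega) (by omega), L4 (min e1 e2 + 1) (by omega) (by omega)]
    ring
  have L5 : ∀ i, 1 ≤ i → i ≤ min e1 e2 →
      uSeq x x' i =
        (((getBit x d1 : ℕ) : ℤ) - ((getBit x' d2 : ℕ) : ℤ)) +
        (((getBit x (max e1 e2) : ℕ) : ℤ) - ((getBit x' (max e1 e2) : ℕ) : ℤ)) +
        (((getBit x (min e1 e2) : ℕ) : ℤ) - ((getBit x' (min e1 e2) : ℕ) : ℤ)) := by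
    have H := downInd'
      (fun i => uSeq x x' i =
        (((getBit x d1 : ℕ) : ℤ) - ((getBit x' d2 : ℕ) : ℤ)) +
        (((getBit x (max e1 e2) : ℕ) : ℤ) - ((getBit x' (max e1 e2) : ℕ) : ℤ)) +
        (((getBit x (min e1 e2) : ℕ) : ℤ) - ((getBit x' (min e1 e2) : ℕ) : ℤ)))
      1 (min e1 e2 - 1)
      (by beta_reduce; rw [show min e1 e2 - 1 + 1 = min e1 e2 from by omega]; exact hbase5)
      (fun i ha hb ih => by
        beta_reduce
        beta_reduce at ih
        rw [uSeq_rec' x x' i (by omega) (by omega), ih,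
          hlow i (by omega) (by omega) (by omega) (by omega)]
        ring)
    intro i hi1 hi2
    exact H i hi1 (by omega)
  -- u_1 = 0
  have hu1 := L5 1 le_rfl (by omega)
  have hdvd : (4 : ℤ) ∣ uSeq x x' 1 := by
    have h := hwt
    unfold Nat.ModEq at h
    unfold uSeq
    rw [sum_getBit', sum_getBit']
    omega
  have hsum : (((getBit x (max e1 e2) : ℕ) : ℤ) - ((getBit x' (max e1 e2) : ℕ) : ℤ)) +
      (((getBit x (min e1 e2) : ℕ) : ℤ) - ((getBit x' (min e1 e2) : ℕ) : ℤ)) =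
      (((getBit x e1 : ℕ) : ℤ) - ((getBit x' e1 : ℕ) : ℤ)) +
      (((getBit x e2 : ℕ) : ℤ) - ((getBit x' e2 : ℕ) : ℤ)) := by
    rcases le_total e1 e2 with h | h
    · rw [max_eq_right h, min_eq_left h]; try ring
    · rw [max_eq_left h, min_eq_right h]; try ring
  have hu1zero : uSeq x x' 1 = 0 := by
    rw [hu1] at hdvd ⊢
    have h5 : (((getBit x (max e1 e2) : ℕ) : ℤ) - ((getBit x' (max e1 e2) : ℕ) : ℤ)) +
        (((getBit x (min e1 e2) : ℕ) : ℤ) - ((getBit x' (min e1 e2) : ℕ) : ℤ)) =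
        2 * ((getBit x e1 : ℕ) : ℤ) - 2 * ((getBit x' e2 : ℕ) : ℤ) := by
      rw [hsum, hflip1, hflip2]; ring
    have b1 := getBit_le' x d1
    have b2 := getBit_nonneg' x d1
    have b3 := getBit_le' x' d2
    have b4 := getBit_nonneg' x' d2
    have b5 := getBit_le' x e1
    have b6 := getBit_nonneg' x e1
    have b7 := getBit_le' x' e2
    have b8 := getBit_nonneg' x' e2
    omega
  -- middle-zone value
  have hmidval : ∀ i, min e1 e2 < i → i ≤ max e1 e2 →
      uSeq x x' i = -(((getBit x (min e1 e2) : ℕ) : ℤ) - ((getBit x' (min e1 e2) : ℕ) : ℤ)) := by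
    intro i hi1 hi2
    rw [L4 i hi1 hi2]
    have h := hu1zero
    rw [hu1] at h
    linarith
  have hlowval : ∀ i, 1 ≤ i → i ≤ min e1 e2 → uSeq x x' i = 0 := by
    intro i hi1 hi2
    rw [L5 i hi1 hi2, ← hu1, hu1zero]
  refine ⟨?_, ?_, ?_⟩
  · rcases le_or_gt (((getBit x (min e1 e2) : ℕ) : ℤ)) (((getBit x' (min e1 e2) : ℕ) : ℤ))
      with h | h
    · left
      intro i hi
      simp only [Finset.mem_Icc] at hi
      rcases le_or_gt i (min e1 e2) with h' | h'
      · rw [hlowval i hi.1 h']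
      · rw [hmidval i h' hi.2]; linarith
    · right
      intro i hi
      simp only [Finset.mem_Icc] at hi
      rcases le_or_gt i (min e1 e2) with h' | h'
      · rw [hlowval i hi.1 h']
      · rw [hmidval i h' hi.2]; linarith
  · have hb : ((getBit x' d2 : ℕ) : ℤ) = 0 ∨ ((getBit x' d2 : ℕ) : ℤ) = 1 := by
      have := getBit_le' x' d2
      have := getBit_nonneg' x' d2
      omega
    rcases hb with h | h
    · left
      intro i hi
      simp only [Finset.mem_Icc] at hi
      rcases le_or_gt i d1 with h1' | h1'
      · rw [L3 i (by omega) h1', h]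
        have := getBit_nonneg' x d1
        linarith
      · rcases le_or_gt i d2 with h2' | h2'
        · rw [L2 i h1' (by omega), h]
          have := getBit_nonneg' x' (i-1)
          linarith
        · rw [L1 i h2']
    · right
      intro i hi
      simp only [Finset.mem_Icc] at hi
      rcases le_or_gt i d1 with h1' | h1'
      · rw [L3 i (by omega) h1', h]
        have := getBit_le' x d1
        linarith
      · rcases le_or_gt i d2 with h2' | h2'
        · rw [L2 i h1' (by omega), h]
          have := getBit_le' x' (i-1)
          linarith
        · rw [L1 i h2']
  · intro i hi
    simp only [Finset.mem_Icc] at hi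
    rw [abs_le]
    rcases le_or_gt i (min e1 e2) with h1' | h1'
    · rw [hlowval i hi.1 h1']
      constructor <;> norm_num
    · rcases le_or_gt i (max e1 e2) with h2' | h2'
      · rw [hmidval i h1' h2']
        have := getBit_le' x (min e1 e2)
        have := getBit_nonneg' x (min e1 e2)
        have := getBit_le' x' (min e1 e2)
        have := getBit_nonneg' x' (min e1 e2)
        constructor <;> linarith
      · rcases le_or_gt i d1 with h3' | h3'
        · rw [L3 i h2' h3']
          have := getBit_le' x d1
          have := getBit_nonneg' x d1
          have := getBit_le' x' d2
          have := getBit_nonneg' x' d2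
          constructor <;> linarith
        · rcases le_or_gt i d2 with h4' | h4'
          · rw [L2 i h3' (by omega)]
            have := getBit_le' x' (i-1)
            have := getBit_nonneg' x' (i-1)
            have := getBit_le' x' d2
            have := getBit_nonneg' x' d2
            constructor <;> linarith
          · rw [L1 i h4']
            constructor <;> norm_num
end

section
/- Let n ≥ 2 and let x, x' ∈ {0,1}^n satisfy wt(x) ≡ wt(x') (mod 4). Suppose d_1, e_1, d_2, e_2 ∈ {1,…,n} with d_1 ≠ e_1, d_2 ≠ e_2, E(x, d_1, e_1) = E(x', d_2, e_2), d_1 ≤ d_2 < e_1, d_2 < e_2, and e_1 ≠ e_2. Let u_i = Σ_{ℓ=i}^n x_ℓ − Σ_{ℓ=i}^n x'_ℓ. Then: either u_i ≥ 0 for all i ∈ [1, d_2] or u_i ≤ 0 for all i ∈ [1, d_2]; either u_i ≥ 0 for all i ∈ [d_2+1, n] or u_i ≤ 0 for all i ∈ [d_2+1, n]; and |u_i| ≤ 1 for all i ∈ {1,…,n}. -/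
/-- Integer value of the bit of `x` at 1-based position `p`. -/
def ZB {n : ℕ} (x : Fin n → Fin 2) (p : ℕ) : ℤ := ((getBit x p : ℕ) : ℤ)

/-- Integer value of the bit of `substAt x e` at 1-based position `p`. -/
def YB {n : ℕ} (x : Fin n → Fin 2) (e p : ℕ) : ℤ := ((getBit (substAt x e) p : ℕ) : ℤ)

/-- Integer suffix sum of `x` from position `i`. -/
def SS {n : ℕ} (x : Fin n → Fin 2) (i : ℕ) : ℤ := ∑ l ∈ Finset.Icc i n, ZB x l

/-- Integer suffix sum of `substAt x e` from position `i`. -/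
def TS {n : ℕ} (x : Fin n → Fin 2) (e i : ℕ) : ℤ := ∑ l ∈ Finset.Icc i n, YB x e l

lemma fin2_cast (v : Fin 2) : (((1 - v : Fin 2) : ℕ) : ℤ) = 1 - ((v : ℕ) : ℤ) := by
  fin_cases v <;> decide

lemma ZB01 {n : ℕ} (x : Fin n → Fin 2) (p : ℕ) : ZB x p = 0 ∨ ZB x p = 1 := by
  have h := (getBit x p).isLt
  unfold ZB; omega

lemma YB01 {n : ℕ} (x : Fin n → Fin 2) (e p : ℕ) : YB x e p = 0 ∨ YB x e p = 1 := by
  have h := (getBit (substAt x e) p).isLt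
  unfold YB; omega

lemma YB_eq {n : ℕ} (x : Fin n → Fin 2) (e : ℕ) {p : ℕ} (h1 : 1 ≤ p) (h2 : p ≤ n) :
    YB x e p = if p = e then 1 - ZB x p else ZB x p := by
  have hp : p - 1 < n := by omega
  have hpe : p - 1 + 1 = p := by omega
  simp only [YB, ZB, getBit, substAt, dif_pos hp, hpe]
  split_ifs with h
  · exact fin2_cast _
  · rfl

lemma sum_step (f : ℕ → ℤ) {i n : ℕ} (h : i ≤ n) :
    ∑ l ∈ Finset.Icc i n, f l = f i + ∑ l ∈ Finset.Icc (i + 1) n, f l := by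
  rw [Finset.Icc_eq_cons_Ioc h, Finset.sum_cons, ← Finset.Icc_add_one_left_eq_Ioc]

lemma TS_SS {n : ℕ} (x : Fin n → Fin 2) {e : ℕ} (he1 : 1 ≤ e) (he2 : e ≤ n)
    {i : ℕ} (hi : 1 ≤ i) :
    TS x e i = SS x i + (if i ≤ e then 1 - 2 * ZB x e else 0) := by
  have h : ∀ l ∈ Finset.Icc i n, YB x e l = ZB x l + (if l = e then 1 - 2 * ZB x e else 0) := by
    intro l hl
    rw [Finset.mem_Icc] at hl
    rw [YB_eq x e (by omega) hl.2]
    split_ifs with hle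
    · subst hle; ring
    · ring
  rw [TS, Finset.sum_congr rfl h, Finset.sum_add_distrib,
    Finset.sum_ite_eq' (Finset.Icc i n) e (fun _ => 1 - 2 * ZB x e)]
  rw [SS]
  congr 1
  simp [Finset.mem_Icc, he2]

lemma SS_wt {n : ℕ} (x : Fin n → Fin 2) : SS x 1 = (wt x : ℤ) := by
  rw [SS, wt]
  push_cast
  rw [show Finset.Icc 1 n = Finset.map ⟨fun i => i + 1, add_left_injective 1⟩
      (Finset.range n) by
    ext a
    simp only [Finset.mem_Icc, Finset.mem_map, Finset.mem_range, Function.Embedding.coeFn_mk]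
    constructor
    · rintro ⟨h1, h2⟩; exact ⟨a - 1, by omega, by omega⟩
    · rintro ⟨b, hb, rfl⟩; omega, Finset.sum_map]
  simp only [Function.Embedding.coeFn_mk]
  rw [← Fin.sum_univ_eq_sum_range (fun i => ZB x (i + 1)) n]
  apply Finset.sum_congr rfl
  intro i _
  simp only [ZB, getBit, Nat.add_sub_cancel]
  rw [dif_pos i.isLt]

lemma uSeq_SS {n : ℕ} (x x' : Fin n → Fin 2) (i : ℕ) :
    uSeq x x' i = SS x i - SS x' i := rfl

/-- Claim 5, Case (vi): the sequence `u` is sign-constant on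
`[1,d2]` and on `[d2+1,n]`, and `|u_i| ≤ 1` everywhere. -/
theorem stmt19 (n : ℕ) (hn : 2 ≤ n) (x x' : Fin n → Fin 2)
    (hwt : wt x ≡ wt x' [MOD 4])
    (d1 e1 d2 e2 : ℕ)
    (hd1 : d1 ∈ Finset.Icc 1 n) (he1 : e1 ∈ Finset.Icc 1 n)
    (hd2 : d2 ∈ Finset.Icc 1 n) (he2 : e2 ∈ Finset.Icc 1 n)
    (h1 : d1 ≠ e1) (h2 : d2 ≠ e2)
    (hE : delSub x d1 e1 = delSub x' d2 e2)
    (hcase : d1 ≤ d2 ∧ d2 < e1 ∧ d2 < e2 ∧ e1 ≠ e2) :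
    ((∀ i ∈ Finset.Icc 1 d2, 0 ≤ uSeq x x' i) ∨
      (∀ i ∈ Finset.Icc 1 d2, uSeq x x' i ≤ 0)) ∧
    ((∀ i ∈ Finset.Icc (d2 + 1) n, 0 ≤ uSeq x x' i) ∨
      (∀ i ∈ Finset.Icc (d2 + 1) n, uSeq x x' i ≤ 0)) ∧
    (∀ i ∈ Finset.Icc 1 n, |uSeq x x' i| ≤ 1) := by
  obtain ⟨hd1l, hd1r⟩ := Finset.mem_Icc.mp hd1
  obtain ⟨he1l, he1r⟩ := Finset.mem_Icc.mp he1
  obtain ⟨hd2l, hd2r⟩ := Finset.mem_Icc.mp hd2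
  obtain ⟨he2l, he2r⟩ := Finset.mem_Icc.mp he2
  obtain ⟨hled, hde1, hde2, hee⟩ := hcase
  -- pointwise consequences of `hE`
  have hEj : ∀ j, 1 ≤ j → j ≤ n - 1 →
      (if j < d1 then getBit (substAt x e1) j else getBit (substAt x e1) (j + 1)) =
      (if j < d2 then getBit (substAt x' e2) j else getBit (substAt x' e2) (j + 1)) := by
    intro j hj1 hj2
    have hj : j - 1 < n - 1 := by omega
    have hc := congrFun hE ⟨j - 1, hj⟩
    simp only [delSub, delAt] at hc
    rw [show j - 1 + 1 = j from by omega, show j - 1 + 2 = j + 1 from by omega] at hc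
    exact hc
  -- basic step lemmas for the auxiliary sequence V i = TS x e1 i - TS x' e2 i
  have hstep : ∀ i, i ≤ n → TS x e1 i - TS x' e2 i =
      (TS x e1 (i + 1) - TS x' e2 (i + 1)) + (YB x e1 i - YB x' e2 i) := by
    intro i h
    simp only [TS]
    rw [sum_step (YB x e1) h, sum_step (YB x' e2) h]
    ring
  have hempty : ∀ i, n < i → TS x e1 i - TS x' e2 i = 0 := by
    intro i h
    simp [TS, Finset.Icc_eq_empty (show ¬ i ≤ n by omega)]
  -- V vanishes above d2
  have hVtopAux : ∀ j i, n + 1 - i ≤ j → d2 + 1 ≤ i → TS x e1 i - TS x' e2 i = 0 := by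
    intro j
    induction j with
    | zero =>
      intro i hji hd
      exact hempty i (by omega)
    | succ k ih =>
      intro i hji hd
      by_cases hin : n < i
      · exact hempty i hin
      · rw [hstep i (by omega)]
        have hj := hEj (i - 1) (by omega) (by omega)
        rw [if_neg (by omega), if_neg (by omega),
          show i - 1 + 1 = i from by omega] at hj
        have h3 : YB x e1 i = YB x' e2 i :=
          congrArg (fun v : Fin 2 => ((v : ℕ) : ℤ)) hj
        rw [ih (i + 1) (by omega) (by omega), h3]
        ring
  have hVtop : ∀ i, d2 + 1 ≤ i → TS x e1 i - TS x' e2 i = 0 := fun i h =>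
    hVtopAux (n + 1 - i) i le_rfl h
  -- V on [d1, d2]
  have hVd2 : TS x e1 d2 - TS x' e2 d2 = YB x e1 d2 - YB x' e2 d2 := by
    rw [hstep d2 hd2r, hVtop (d2 + 1) le_rfl]
    ring
  have hVmidAux : ∀ j i, d2 - i ≤ j → d1 ≤ i → i ≤ d2 →
      TS x e1 i - TS x' e2 i = YB x e1 i - YB x' e2 d2 := by
    intro j
    induction j with
    | zero =>
      intro i hji hdi hid
      have : i = d2 := by omega
      subst this
      exact hVd2
    | succ k ih =>
      intro i hji hdi hid
      by_cases hmx : i = d2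
      · subst hmx; exact hVd2
      · rw [hstep i (by omega)]
        have hj := hEj i (by omega) (by omega)
        rw [if_neg (by omega), if_pos (by omega)] at hj
        have h3 : YB x e1 (i + 1) = YB x' e2 i :=
          congrArg (fun v : Fin 2 => ((v : ℕ) : ℤ)) hj
        rw [ih (i + 1) (by omega) (by omega) (by omega), h3]
        ring
  have hVmid : ∀ i, d1 ≤ i → i ≤ d2 → TS x e1 i - TS x' e2 i = YB x e1 i - YB x' e2 d2 :=
    fun i h1' h2' => hVmidAux (d2 - i) i le_rfl h1' h2'
  -- V below d1
  have hVlowAux : ∀ j i, d1 - i ≤ j → 1 ≤ i → i ≤ d1 →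
      TS x e1 i - TS x' e2 i = YB x e1 d1 - YB x' e2 d2 := by
    intro j
    induction j with
    | zero =>
      intro i hji hi1 hid
      have : i = d1 := by omega
      subst this
      exact hVmid _ le_rfl hled
    | succ k ih =>
      intro i hji hi1 hid
      by_cases hmx : i = d1
      · subst hmx; exact hVmid _ le_rfl hled
      · rw [hstep i (by omega)]
        have hj := hEj i (by omega) (by omega)
        rw [if_pos (by omega), if_pos (by omega)] at hj
        have h3 : YB x e1 i = YB x' e2 i :=
          congrArg (fun v : Fin 2 => ((v : ℕ) : ℤ)) hj
        rw [ih (i + 1) (by omega) (by omega) (by omega), h3]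
        ring
  have hVlow : ∀ i, 1 ≤ i → i ≤ d1 → TS x e1 i - TS x' e2 i = YB x e1 d1 - YB x' e2 d2 :=
    fun i h1' h2' => hVlowAux (d1 - i) i le_rfl h1' h2'
  -- relation between u and V
  have hu : ∀ i, 1 ≤ i → uSeq x x' i = (TS x e1 i - TS x' e2 i)
      - (if i ≤ e1 then 1 - 2 * ZB x e1 else 0)
      + (if i ≤ e2 then 1 - 2 * ZB x' e2 else 0) := by
    intro i hi
    have hA := TS_SS x he1l he1r hi
    have hB := TS_SS x' he2l he2r hi
    rw [uSeq_SS, hA, hB]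
    ring
  -- the weight congruence forces the key equalities
  have hdvd : (4 : ℤ) ∣ (wt x' : ℤ) - (wt x : ℤ) := Nat.modEq_iff_dvd.mp hwt
  have hu1 : uSeq x x' 1 = (wt x : ℤ) - (wt x' : ℤ) := by
    rw [uSeq_SS, SS_wt, SS_wt]
  have hu1' : uSeq x x' 1 = (YB x e1 d1 - YB x' e2 d2)
      - (1 - 2 * ZB x e1) + (1 - 2 * ZB x' e2) := by
    rw [hu 1 le_rfl, hVlow 1 le_rfl hd1l, if_pos he1l, if_pos he2l]
  have hY1 := YB01 x e1 d1
  have hY2 := YB01 x' e2 d2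
  have hZ1 := ZB01 x e1
  have hZ2 := ZB01 x' e2
  have hkey1 : YB x e1 d1 = YB x' e2 d2 := by omega
  have hkey2 : ZB x e1 = ZB x' e2 := by omega
  -- range of V on [1, d2]
  have hVrange : ∀ i, 1 ≤ i → i ≤ d2 →
      TS x e1 i - TS x' e2 i = 0 ∨
      TS x e1 i - TS x' e2 i = YB x e1 i - YB x' e2 d2 := by
    intro i hi1 hi2
    rcases le_or_gt d1 i with h | h
    · exact Or.inr (hVmid i h hi2)
    · left; rw [hVlow i hi1 (by omega)]; omega
  -- description of u above d2
  have hu2 : ∀ i, d2 + 1 ≤ i → uSeq x x' i =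
      (if i ≤ e2 then 1 - 2 * ZB x' e2 else 0) - (if i ≤ e1 then 1 - 2 * ZB x e1 else 0) := by
    intro i hi
    rw [hu i (by omega), hVtop i hi]
    ring
  refine ⟨?_, ?_, ?_⟩
  · -- sign-constant on [1, d2]
    rcases hY2 with h | h
    · left
      intro i hi
      rw [Finset.mem_Icc] at hi
      have hv := hVrange i hi.1 hi.2
      have hy := YB01 x e1 i
      rw [hu i hi.1, if_pos (by omega), if_pos (by omega)]
      omega
    · right
      intro i hi
      rw [Finset.mem_Icc] at hi
      have hv := hVrange i hi.1 hi.2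
      have hy := YB01 x e1 i
      rw [hu i hi.1, if_pos (by omega), if_pos (by omega)]
      omega
  · -- sign-constant on [d2+1, n]
    rcases hZ1 with hc | hc <;> rcases le_or_gt e1 e2 with h12 | h12
    · left
      intro i hi
      rw [Finset.mem_Icc] at hi
      rw [hu2 i hi.1]
      split_ifs <;> omega
    · right
      intro i hi
      rw [Finset.mem_Icc] at hi
      rw [hu2 i hi.1]
      split_ifs <;> omega
    · right
      intro i hi
      rw [Finset.mem_Icc] at hi
      rw [hu2 i hi.1]
      split_ifs <;> omega
    · left
      intro i hi
      rw [Finset.mem_Icc] at hi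
      rw [hu2 i hi.1]
      split_ifs <;> omega
  · -- |u i| ≤ 1 everywhere
    intro i hi
    rw [Finset.mem_Icc] at hi
    rw [abs_le]
    rcases le_or_gt i d2 with h | h
    · have hv := hVrange i hi.1 h
      have hy := YB01 x e1 i
      rw [hu i hi.1, if_pos (by omega), if_pos (by omega)]
      omega
    · rw [hu2 i (by omega)]
      split_ifs <;> omega
end
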